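/- The dual cone of ℝ̄₊ = [0,+∞] with neighborhood system V = (0,∞) consists exactly of multiplication by nonnegative reals together with the functional 0̄ defined by 0̄(a) = 0 for a ∈ ℝ₊ and 0̄(+∞) = +∞. -/
import Mathlib


open scoped NNReal ENNReal

/-- the dual cone of `ℝ̄₊ = [0, +∞]` with `V = (0, ∞)` consists
exactly of the multiplications by nonnegative reals together with the
functional `0̄` with `0̄(a) = 0` for `a ∈ ℝ₊` and `0̄(+∞) = +∞`. -/

private lemma stmt19_one_ne_bot : (1 : EReal) ≠ ⊥ := by
  rw [← EReal.coe_one]; exact EReal.coe_ne_bot 1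

private lemma stmt19_one_ne_top : (1 : EReal) ≠ ⊤ := by
  rw [← EReal.coe_one]; exact EReal.coe_ne_top 1

private lemma stmt19_neg_one : (-1 : EReal) = ((-1 : ℝ) : EReal) := by
  rw [EReal.coe_neg, EReal.coe_one]

theorem stmt19 (μ : ℝ≥0∞ → EReal) :
    ((∀ x, μ x ≠ ⊥) ∧
     (∀ x y : ℝ≥0∞, μ (x + y) = μ x + μ y) ∧
     (∀ (r : ℝ≥0) (x : ℝ≥0∞), μ ((r : ℝ≥0∞) * x) = ((r : ℝ) : EReal) * μ x) ∧
     (∃ v : ℝ, 0 < v ∧ ∀ a b : ℝ≥0∞, a ≤ b + ENNReal.ofReal v →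
        μ a ≤ μ b + 1)) ↔
    ((∃ c : ℝ≥0, ∀ x : ℝ≥0∞, μ x = ((c : ℝ) : EReal) * (x : EReal)) ∨
     (∀ x : ℝ≥0∞, μ x = if x = ⊤ then (⊤ : EReal) else 0)) := by
  constructor
  · rintro ⟨hbot, hadd, hsmul, v, hv, hcont⟩
    have hzero : μ 0 = 0 := by simpa using hsmul 0 0
    -- lower bound -1
    have hlb : ∀ b, (-1 : EReal) ≤ μ b := by
      intro b
      have h0 : μ 0 ≤ μ b + 1 := hcont 0 b (by simp)
      rw [hzero] at h0
      rcases eq_or_ne (μ b) ⊤ with h | h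
      · simp [h]
      · lift μ b to ℝ using ⟨h, hbot b⟩ with t ht
        have h1 : (0 : ℝ) ≤ t + 1 := by exact_mod_cast h0
        rw [stmt19_neg_one]
        exact EReal.coe_le_coe_iff.2 (by linarith)
    -- nonnegativity
    have hnn : ∀ b, (0 : EReal) ≤ μ b := by
      intro b
      by_contra hneg
      push_neg at hneg
      have hne : μ b ≠ ⊤ := ne_top_of_lt hneg
      lift μ b to ℝ using ⟨hne, hbot b⟩ with t ht
      have htneg : t < 0 := by exact_mod_cast hneg
      set r : ℝ≥0 := ⟨2 / (-t), div_nonneg (by norm_num) (by linarith)⟩ with hr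
      have h1 := hlb ((r : ℝ≥0∞) * b)
      rw [hsmul r b, ← ht] at h1
      rw [stmt19_neg_one, ← EReal.coe_mul] at h1
      have h2 : (-1 : ℝ) ≤ (r : ℝ) * t := EReal.coe_le_coe_iff.1 h1
      have hrr : (r : ℝ) = 2 / (-t) := rfl
      rw [hrr] at h2
      have : (2 / (-t)) * t = -2 := by
        have ht0 : t ≠ 0 := ne_of_lt htneg
        rw [div_mul_eq_mul_div, div_eq_iff (neg_ne_zero.2 ht0)]
        ring
      linarith
    -- μ 1 is finite
    have hone_ne_top : μ 1 ≠ ⊤ := by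
      intro h
      set r : ℝ≥0 := (min v 1).toNNReal with hr
      have hrpos : 0 < r := by
        rw [hr]
        exact Real.toNNReal_pos.2 (lt_min hv one_pos)
      have hle : (r : ℝ≥0∞) ≤ 0 + ENNReal.ofReal v := by
        rw [zero_add]
        have : (r : ℝ≥0∞) = ENNReal.ofReal (min v 1) := rfl
        rw [this]
        exact ENNReal.ofReal_le_ofReal (min_le_left _ _)
      have h1 := hcont r 0 hle
      rw [hzero, zero_add] at h1
      have h2 : μ ((r : ℝ≥0∞)) = ((r : ℝ) : EReal) * μ 1 := by
        simpa using hsmul r 1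
      rw [h2, h, EReal.coe_mul_top_of_pos (by exact_mod_cast hrpos)] at h1
      exact stmt19_one_ne_top (top_le_iff.1 h1)
    lift μ 1 to ℝ using ⟨hone_ne_top, hbot 1⟩ with c₀ hone
    have hc₀ : 0 ≤ c₀ := by
      have h1 := hnn 1
      rw [← hone] at h1
      exact_mod_cast h1
    set c : ℝ≥0 := ⟨c₀, hc₀⟩ with hcdef
    have hcc : ((c : ℝ) : EReal) = (c₀ : EReal) := rfl
    have hfin : ∀ x : ℝ≥0∞, x ≠ ⊤ → μ x = ((c : ℝ) : EReal) * (x : EReal) := by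
      intro x hx
      lift x to ℝ≥0 using hx with s
      have h1 := hsmul s 1
      rw [mul_one, ← hone] at h1
      rw [h1, hcc, EReal.coe_nnreal_eq_coe_real]
      rw [← EReal.coe_mul, ← EReal.coe_mul, mul_comm]
    have htt : μ ⊤ = μ ⊤ + μ ⊤ := by
      have := hadd ⊤ ⊤
      rwa [top_add] at this
    rcases eq_or_ne (μ ⊤) ⊤ with htop | htop
    · rcases eq_or_ne c 0 with hc0 | hc0
      · right
        intro x
        split_ifs with h
        · rw [h, htop]
        · rw [hfin x h, hc0]
          simp
      · left
        refine ⟨c, fun x => ?_⟩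
        rcases eq_or_ne x ⊤ with h | h
        · rw [h, htop, EReal.coe_ennreal_top,
            EReal.coe_mul_top_of_pos (by exact_mod_cast hc0.bot_lt)]
        · exact hfin x h
    · have htop0 : μ ⊤ = 0 := by
        lift μ ⊤ to ℝ using ⟨htop, hbot ⊤⟩ with t ht
        have h1 : t = t + t := by exact_mod_cast htt
        exact_mod_cast (by linarith : t = 0)
      have hc0 : c₀ = 0 := by
        have h1 := hadd 1 ⊤
        rw [add_top, htop0, ← hone] at h1
        have : (0 : ℝ) = c₀ + 0 := by exact_mod_cast h1
        linarith
      left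
      refine ⟨c, fun x => ?_⟩
      rcases eq_or_ne x ⊤ with h | h
      · rw [h, htop0, hcc, hc0]
        simp
      · exact hfin x h
  · rintro (⟨c, hc⟩ | h)
    · have hnnx : ∀ x : ℝ≥0∞, (0 : EReal) ≤ μ x := by
        intro x
        rw [hc]
        exact mul_nonneg (by exact_mod_cast c.coe_nonneg) (EReal.coe_ennreal_nonneg x)
      refine ⟨fun x => ?_, fun x y => ?_, fun r x => ?_, ?_⟩
      · exact fun hb => by simpa [hb] using hnnx x
      · rw [hc, hc, hc, EReal.coe_ennreal_add]
        exact EReal.left_distrib_of_nonneg (EReal.coe_ennreal_nonneg x)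
          (EReal.coe_ennreal_nonneg y)
      · rw [hc, hc, EReal.coe_ennreal_mul, EReal.coe_nnreal_eq_coe_real,
          mul_left_comm]
      · rcases eq_or_ne c 0 with hc0 | hc0
        · exact ⟨1, one_pos, fun a b _ => by
            rw [hc, hc, hc0]
            simp⟩
        · refine ⟨1 / ((c : ℝ) + 1), by positivity, fun a b hab => ?_⟩
          rcases eq_or_ne b ⊤ with hb | hb
          · rw [hb, hc ⊤, EReal.coe_ennreal_top,
              EReal.coe_mul_top_of_pos (by exact_mod_cast hc0.bot_lt)]
            rw [EReal.top_add_of_ne_bot stmt19_one_ne_bot]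
            exact le_top
          · have ha : a ≠ ⊤ := by
              intro h
              rw [h] at hab
              exact (ENNReal.add_ne_top.2 ⟨hb, ENNReal.ofReal_ne_top⟩)
                (top_le_iff.1 hab)
            lift a to ℝ≥0 using ha with a'
            lift b to ℝ≥0 using hb with b'
            rw [hc, hc, EReal.coe_nnreal_eq_coe_real, EReal.coe_nnreal_eq_coe_real]
            have hab' : (a' : ℝ) ≤ (b' : ℝ) + (1 / ((c : ℝ) + 1)) := by
              have h1 : (a' : ℝ≥0∞) ≤ (b' : ℝ≥0∞) + ENNReal.ofReal (1 / ((c : ℝ) + 1)) := hab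
              have h2 := ENNReal.toReal_mono (by
                exact ENNReal.add_ne_top.2 ⟨ENNReal.coe_ne_top, ENNReal.ofReal_ne_top⟩) h1
              rw [ENNReal.toReal_add ENNReal.coe_ne_top ENNReal.ofReal_ne_top] at h2
              rw [ENNReal.toReal_ofReal (by positivity)] at h2
              simpa using h2
            have hcv : (c : ℝ) * (1 / ((c : ℝ) + 1)) ≤ 1 := by
              rw [mul_one_div, div_le_one (by positivity)]
              linarith
            have key : (c : ℝ) * (a' : ℝ) ≤ (c : ℝ) * (b' : ℝ) + 1 := by
              nlinarith [c.coe_nonneg]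
            exact_mod_cast key
    · refine ⟨fun x => ?_, fun x y => ?_, fun r x => ?_, ?_⟩
      · rw [h]; split_ifs <;> simp
      · rw [h, h, h]
        rcases eq_or_ne x ⊤ with hx | hx <;> rcases eq_or_ne y ⊤ with hy | hy
        · simp [hx, hy, EReal.top_add_top]
        · simp [hx, hy]
        · simp [hx, hy]
        · simp [hx, hy, ENNReal.add_eq_top]
      · rw [h, h]
        rcases eq_or_ne r 0 with hr | hr
        · simp [hr]
        · rcases eq_or_ne x ⊤ with hx | hx
          · rw [hx]
            rw [ENNReal.mul_top (by exact_mod_cast hr)]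
            simp only [if_pos rfl]
            exact (EReal.coe_mul_top_of_pos (by exact_mod_cast hr.bot_lt)).symm
          · rw [if_neg (ENNReal.mul_ne_top ENNReal.coe_ne_top hx), if_neg hx,
              mul_zero]
      · refine ⟨1, one_pos, fun a b hab => ?_⟩
        rw [h, h]
        rcases eq_or_ne a ⊤ with ha | ha
        · have hb : b = ⊤ := by
            by_contra hb
            rw [ha] at hab
            exact (ENNReal.add_ne_top.2 ⟨hb, ENNReal.ofReal_ne_top⟩)
              (top_le_iff.1 hab)
          rw [if_pos ha, if_pos hb, EReal.top_add_of_ne_bot stmt19_one_ne_bot]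
        · rw [if_neg ha]
          split_ifs
          · rw [EReal.top_add_of_ne_bot stmt19_one_ne_bot]
            exact le_top
          · norm_num
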